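/- arXiv:1903.07083 — 5 statements merged into one kernel-verified Lean document; each statement's English description precedes it below -/
import Mathlib

section
/- For every integer d ≥ 3 and every prime power q, the sum over i from 1 to ⌈d/2⌉ - 1 of the reciprocals of the Gaussian binomial coefficients binom(d,i)_q is strictly less than q^{-(d-1)}. -/
/-- The Gaussian binomial coefficient `binom(d,i)_q` as a real number. -/
noncomputable def gbinom (q d i : ℕ) : ℝ :=
  (∏ j ∈ Finset.Icc (d - i + 1) d, ((q : ℝ) ^ j - 1)) /
    (∏ j ∈ Finset.Icc 1 i, ((q : ℝ) ^ j - 1))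

lemma gbinom_lb (q d i : ℕ) (hq : 2 ≤ q) (hi : 1 ≤ i) (hid : i + 1 ≤ d) :
    ((q : ℝ) + 1) * (q : ℝ) ^ ((d - i) * i - 1) ≤ gbinom q d i := by
  have hQ : (2 : ℝ) ≤ (q : ℝ) := by exact_mod_cast hq
  have hQ0 : (0 : ℝ) < (q : ℝ) := by linarith
  have hQ1 : (1 : ℝ) ≤ (q : ℝ) := by linarith
  set a := d - i with ha
  have hai : a + i = d := by omega
  have ha1 : 1 ≤ a := by omega
  -- positivity of factors for j ≥ 1
  have hfac : ∀ j : ℕ, 1 ≤ j → (0:ℝ) < (q:ℝ) ^ j - 1 := by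
    intro j hj
    have : (2:ℝ) ≤ (q:ℝ) ^ j := by
      calc (2:ℝ) ≤ (q:ℝ) := hQ
      _ = (q:ℝ) ^ 1 := (pow_one _).symm
      _ ≤ (q:ℝ) ^ j := pow_le_pow_right₀ hQ1 hj
    linarith
  have hD : (0:ℝ) < ∏ j ∈ Finset.Icc 1 i, ((q : ℝ) ^ j - 1) :=
    Finset.prod_pos fun j hj => hfac j (Finset.mem_Icc.mp hj).1
  -- rewrite numerator
  have hnum : (∏ j ∈ Finset.Icc (d - i + 1) d, ((q : ℝ) ^ j - 1))
      = ∏ j ∈ Finset.Icc 1 i, ((q : ℝ) ^ (a + j) - 1) := by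
    rw [← hai, show a + i - i + 1 = a + 1 by omega,
      ← Finset.map_add_left_Icc 1 i a, Finset.prod_map]
    rfl
  obtain ⟨c, rfl⟩ : ∃ c, i = c + 1 := ⟨i - 1, by omega⟩
  have hsplit : ∀ f : ℕ → ℝ, ∏ j ∈ Finset.Icc 1 (c+1), f j
      = f 1 * ∏ j ∈ Finset.Icc 2 (c+1), f j := by
    intro f
    rw [← Finset.Ico_add_one_right_eq_Icc, Finset.prod_eq_prod_Ico_succ_bot (by omega),
      Finset.Ico_add_one_right_eq_Icc]
  -- bound on the tail product
  have htail : (((q:ℝ) ^ a) ^ c) * ∏ j ∈ Finset.Icc 2 (c+1), ((q:ℝ) ^ j - 1)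
      ≤ ∏ j ∈ Finset.Icc 2 (c+1), ((q:ℝ) ^ (a + j) - 1) := by
    have := Finset.prod_le_prod (s := Finset.Icc 2 (c+1))
      (f := fun j => (q:ℝ) ^ a * ((q:ℝ) ^ j - 1))
      (g := fun j => (q:ℝ) ^ (a + j) - 1)
      (fun j hj => by
        have := hfac j (by have := (Finset.mem_Icc.mp hj).1; omega)
        positivity)
      (fun j hj => by
        have h1 : (1:ℝ) ≤ (q:ℝ) ^ a := one_le_pow₀ hQ1
        show (q:ℝ) ^ a * ((q:ℝ) ^ j - 1) ≤ (q:ℝ) ^ (a + j) - 1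
        rw [pow_add]; nlinarith)
    calc (((q:ℝ) ^ a) ^ c) * ∏ j ∈ Finset.Icc 2 (c+1), ((q:ℝ) ^ j - 1)
        = ∏ j ∈ Finset.Icc 2 (c+1), ((q:ℝ) ^ a * ((q:ℝ) ^ j - 1)) := by
          rw [Finset.prod_mul_distrib, Finset.prod_const, Nat.card_Icc,
            show c + 1 + 1 - 2 = c from by omega]
      _ ≤ _ := this
  -- bound on the first factor
  have hhead : ((q:ℝ) + 1) * (q:ℝ) ^ (a - 1) * ((q:ℝ) - 1) ≤ (q:ℝ) ^ (a + 1) - 1 := by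
    have h1 : (1:ℝ) ≤ (q:ℝ) ^ (a - 1) := one_le_pow₀ hQ1
    have h2 : (q:ℝ) ^ (a + 1) = (q:ℝ) ^ 2 * (q:ℝ) ^ (a - 1) := by
      rw [← pow_add, show 2 + (a - 1) = a + 1 by omega]
    nlinarith
  -- exponent arithmetic
  have hexp : (q:ℝ) ^ (a * (c + 1) - 1) = (q:ℝ) ^ (a - 1) * ((q:ℝ) ^ a) ^ c := by
    rw [← pow_mul, ← pow_add]
    congr 1
    have : a * (c + 1) = a * c + a := by ring
    zify [ha1, show 1 ≤ a * (c+1) by nlinarith] at this ⊢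
    omega
  rw [gbinom, hnum, le_div_iff₀ hD, hsplit, hsplit]
  have hpos1 : (0:ℝ) ≤ ((q:ℝ) + 1) * (q:ℝ) ^ (a - 1) * ((q:ℝ) - 1) := by
    have h1 : (0:ℝ) < (q:ℝ) ^ (a - 1) := by positivity
    exact mul_nonneg (mul_nonneg (by linarith) h1.le) (by linarith)
  have hpos2 : (0:ℝ) ≤ (((q:ℝ) ^ a) ^ c) * ∏ j ∈ Finset.Icc 2 (c+1), ((q:ℝ) ^ j - 1) := by
    have : (0:ℝ) < ∏ j ∈ Finset.Icc 2 (c+1), ((q:ℝ) ^ j - 1) :=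
      Finset.prod_pos fun j hj => hfac j (by have := (Finset.mem_Icc.mp hj).1; omega)
    positivity
  calc ((q:ℝ) + 1) * (q:ℝ) ^ ((d - (c+1)) * (c+1) - 1) *
        (((q:ℝ) ^ 1 - 1) * ∏ j ∈ Finset.Icc 2 (c+1), ((q:ℝ) ^ j - 1))
      = (((q:ℝ) + 1) * (q:ℝ) ^ (a - 1) * ((q:ℝ) - 1)) *
        ((((q:ℝ) ^ a) ^ c) * ∏ j ∈ Finset.Icc 2 (c+1), ((q:ℝ) ^ j - 1)) := by
        rw [← ha, hexp]; ring
    _ ≤ ((q:ℝ) ^ (a + 1) - 1) *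
        ∏ j ∈ Finset.Icc 2 (c+1), ((q:ℝ) ^ (a + j) - 1) :=
        mul_le_mul hhead htail hpos2
          (le_of_lt (by
            have : (2:ℝ) ≤ (q:ℝ) ^ (a + 1) := by
              calc (2:ℝ) ≤ (q:ℝ) := hQ
              _ = (q:ℝ) ^ 1 := (pow_one _).symm
              _ ≤ (q:ℝ) ^ (a + 1) := pow_le_pow_right₀ hQ1 (by omega)
            linarith))

lemma exp_ineq (d i : ℕ) (hi : 1 ≤ i) (h : 2 * i + 1 ≤ d) :
    d - 2 + 2 * (i - 1) ≤ (d - i) * i - 1 := by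
  have key : d + 2 * i ≤ (d - i) * i + 3 := by
    rcases Nat.lt_or_ge i 2 with h2 | h2
    · have : i = 1 := by omega
      subst this; omega
    · obtain ⟨b, hb⟩ : ∃ b, d - i = b + 3 := ⟨d - i - 3, by omega⟩
      obtain ⟨c, hc⟩ : ∃ c, i = c + 2 := ⟨i - 2, by omega⟩
      have hd' : d = b + c + 5 := by omega
      rw [hb, hc, hd']
      nlinarith [Nat.zero_le (b * c)]
  have h1 : 1 ≤ (d - i) * i :=
    Nat.one_le_iff_ne_zero.mpr (Nat.mul_ne_zero (by omega) (by omega))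
  omega

/-- For `d ≥ 3` and a prime power `q`,
`∑_{i=1}^{⌈d/2⌉-1} binom(d,i)_q⁻¹ < q^{-(d-1)}`. -/
theorem sum_gbinom_inv_lt (q d : ℕ) (hq : IsPrimePow q) (hd : 3 ≤ d) :
    ∑ i ∈ Finset.Icc 1 ((d + 1) / 2 - 1), (gbinom q d i)⁻¹ < (q : ℝ) ^ (-(d : ℤ) + 1) := by
  have hq2 : 2 ≤ q := hq.two_le
  have hQ : (2 : ℝ) ≤ (q : ℝ) := by exact_mod_cast hq2
  have hQ0 : (0 : ℝ) < (q : ℝ) := by linarith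
  have hQ1 : (1 : ℝ) ≤ (q : ℝ) := by linarith
  set m := (d + 1) / 2 - 1 with hm
  set C : ℝ := (((q : ℝ) + 1) * (q : ℝ) ^ (d - 2))⁻¹ with hC
  set r : ℝ := ((q : ℝ) ^ 2)⁻¹ with hr
  have hr0 : (0 : ℝ) ≤ r := by positivity
  have hr1 : r < 1 := by
    rw [hr, inv_lt_one_iff₀]; right; nlinarith
  have hC0 : (0 : ℝ) ≤ C := by positivity
  -- per-term bound
  have hterm : ∀ i ∈ Finset.Icc 1 m, (gbinom q d i)⁻¹ ≤ C * r ^ (i - 1) := by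
    intro i hi
    obtain ⟨hi1, him⟩ := Finset.mem_Icc.mp hi
    have h2i : 2 * i + 1 ≤ d := by omega
    have hlb := gbinom_lb q d i hq2 hi1 (by omega)
    have hlbpos : (0 : ℝ) < ((q : ℝ) + 1) * (q : ℝ) ^ ((d - i) * i - 1) := by positivity
    have step1 : (gbinom q d i)⁻¹ ≤ (((q : ℝ) + 1) * (q : ℝ) ^ ((d - i) * i - 1))⁻¹ :=
      inv_anti₀ hlbpos hlb
    have hexp := exp_ineq d i hi1 h2i
    have step2 : ((q : ℝ) + 1) * (q : ℝ) ^ (d - 2 + 2 * (i - 1))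
        ≤ ((q : ℝ) + 1) * (q : ℝ) ^ ((d - i) * i - 1) := by
      have := pow_le_pow_right₀ hQ1 hexp
      nlinarith
    have hpos2 : (0 : ℝ) < ((q : ℝ) + 1) * (q : ℝ) ^ (d - 2 + 2 * (i - 1)) := by positivity
    have step3 : (((q : ℝ) + 1) * (q : ℝ) ^ ((d - i) * i - 1))⁻¹
        ≤ (((q : ℝ) + 1) * (q : ℝ) ^ (d - 2 + 2 * (i - 1)))⁻¹ :=
      inv_anti₀ hpos2 step2
    have heq : (((q : ℝ) + 1) * (q : ℝ) ^ (d - 2 + 2 * (i - 1)))⁻¹ = C * r ^ (i - 1) := by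
      rw [hC, hr, inv_pow, ← mul_inv, pow_add, pow_mul, mul_assoc]
    linarith [step1, step3, heq.le]
  -- geometric series bound
  have hsum : ∑ i ∈ Finset.Icc 1 m, C * r ^ (i - 1) = C * ∑ k ∈ Finset.range m, r ^ k := by
    rw [← Finset.Ico_add_one_right_eq_Icc, Finset.sum_Ico_eq_sum_range, Finset.mul_sum]
    simp
  have hgeom : ∑ k ∈ Finset.range m, r ^ k ≤ (1 - r)⁻¹ :=
    sum_le_hasSum _ (fun k _ => by positivity) (hasSum_geometric_of_lt_one hr0 hr1)
  -- final numeric inequality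
  have hrhs : (q : ℝ) ^ (-(d : ℤ) + 1) = ((q : ℝ) ^ (d - 1))⁻¹ := by
    rw [show (-(d : ℤ) + 1) = -((d : ℤ) - 1) by ring,
      show ((d : ℤ) - 1) = ((d - 1 : ℕ) : ℤ) by omega, zpow_neg, zpow_natCast]
  have hP : (0 : ℝ) < (q : ℝ) ^ (d - 2) := by positivity
  have hsplit : (q : ℝ) ^ (d - 1) = (q : ℝ) * (q : ℝ) ^ (d - 2) := by
    rw [← pow_succ']
    congr 1
    omega
  have hkey : (q : ℝ) < ((q : ℝ) + 1) * (1 - r) := by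
    have h2 : (q : ℝ) ^ 2 * r = 1 := mul_inv_cancel₀ (by positivity)
    nlinarith
  have hfin : C * (1 - r)⁻¹ < ((q : ℝ) ^ (d - 1))⁻¹ := by
    rw [hC, hsplit, ← mul_inv]
    apply inv_strictAnti₀ (by positivity)
    calc (q : ℝ) * (q : ℝ) ^ (d - 2)
        < (((q : ℝ) + 1) * (1 - r)) * (q : ℝ) ^ (d - 2) :=
          mul_lt_mul_of_pos_right hkey hP
      _ = ((q : ℝ) + 1) * (q : ℝ) ^ (d - 2) * (1 - r) := by ring
  calc ∑ i ∈ Finset.Icc 1 m, (gbinom q d i)⁻¹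
      ≤ ∑ i ∈ Finset.Icc 1 m, C * r ^ (i - 1) := Finset.sum_le_sum hterm
    _ = C * ∑ k ∈ Finset.range m, r ^ k := hsum
    _ ≤ C * (1 - r)⁻¹ := mul_le_mul_of_nonneg_left hgeom hC0
    _ < ((q : ℝ) ^ (d - 1))⁻¹ := hfin
    _ = (q : ℝ) ^ (-(d : ℤ) + 1) := hrhs.symm
end

section
/- For integers d ≥ 3, 2 < i ≤ ⌈d/2⌉ - 1, and any prime power q, the Gaussian binomial coefficient satisfies binom(d,2)_q < binom(d,i)_q. -/
lemma gterm_pos {q : ℕ} (hq : 2 ≤ q) {j : ℕ} (hj : 1 ≤ j) : 0 < (q:ℝ) ^ j - 1 := by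
  have h2 : (2:ℝ) ≤ (q:ℝ) := by exact_mod_cast hq
  have : (2:ℝ) ≤ (q:ℝ)^j :=
    le_trans h2 (le_self_pow₀ (by linarith) (by omega))
  linarith

lemma gprod_pos {q : ℕ} (hq : 2 ≤ q) (a b : ℕ) (ha : 1 ≤ a) :
    0 < ∏ j ∈ Finset.Icc a b, ((q : ℝ) ^ j - 1) := by
  apply Finset.prod_pos
  intro j hj
  exact gterm_pos hq (le_trans ha (Finset.mem_Icc.mp hj).1)

lemma gbinom_pos {q : ℕ} (hq : 2 ≤ q) (d i : ℕ) : 0 < gbinom q d i :=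
  div_pos (gprod_pos hq _ _ (by omega)) (gprod_pos hq _ _ le_rfl)

lemma gbinom_succ {q : ℕ} (hq : 2 ≤ q) (d k : ℕ) (hk : k + 1 ≤ d) :
    gbinom q d (k + 1) =
      gbinom q d k * (((q:ℝ) ^ (d - k) - 1) / ((q:ℝ) ^ (k + 1) - 1)) := by
  unfold gbinom
  have h1 : d - (k + 1) + 1 = d - k := by omega
  have h2 : insert (d - k) (Finset.Icc (d - k + 1) d) = Finset.Icc (d - k) d :=
    Finset.insert_Icc_add_one_left_eq_Icc (by omega)
  have h3 : insert (k + 1) (Finset.Icc 1 k) = Finset.Icc 1 (k + 1) :=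
    Finset.insert_Icc_right_eq_Icc_add_one (by omega)
  rw [h1, ← h2, ← h3, Finset.prod_insert (by simp), Finset.prod_insert (by simp)]
  have hN := gprod_pos hq (d - k + 1) d (by omega)
  have hD := gprod_pos hq 1 k le_rfl
  have hb := gterm_pos hq (j := k + 1) (by omega)
  field_simp

lemma gbinom_lt_succ {q : ℕ} (hq : 2 ≤ q) {d k : ℕ} (hk : 2 * k + 2 ≤ d) :
    gbinom q d k < gbinom q d (k + 1) := by
  rw [gbinom_succ hq d k (by omega)]
  have hb := gterm_pos hq (j := k + 1) (by omega)
  have hlt : (q:ℝ) ^ (k + 1) < (q:ℝ) ^ (d - k) := by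
    apply pow_lt_pow_right₀ (by exact_mod_cast hq) (by omega)
  have hr : 1 < ((q:ℝ) ^ (d - k) - 1) / ((q:ℝ) ^ (k + 1) - 1) :=
    (one_lt_div hb).mpr (by linarith)
  nlinarith [gbinom_pos hq d k]

/-- For `d ≥ 3`, `2 < i ≤ ⌈d/2⌉ - 1` and a prime power `q`,
`binom(d,2)_q < binom(d,i)_q`. -/
theorem gbinom_two_lt (q d i : ℕ) (hq : IsPrimePow q) (hd : 3 ≤ d)
    (hi : 2 < i) (hi' : i ≤ (d + 1) / 2 - 1) :
    gbinom q d 2 < gbinom q d i := by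
  have hq2 : 2 ≤ q := hq.two_le
  have hdi : 2 * i + 1 ≤ d := by omega
  have key : ∀ m, 2 ≤ m → 2 * m ≤ d → gbinom q d 2 ≤ gbinom q d m := by
    intro m hm
    induction m, hm using Nat.le_induction with
    | base => intro _; exact le_rfl
    | succ n hn ih =>
      intro h
      exact le_trans (ih (by omega)) (le_of_lt (gbinom_lt_succ hq2 (by omega)))
  obtain ⟨k, rfl⟩ : ∃ k, i = k + 1 := ⟨i - 1, by omega⟩
  exact lt_of_le_of_lt (key k (by omega) (by omega)) (gbinom_lt_succ hq2 (by omega))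
end

section
/- An element g ∈ GL(d,q) has an irreducible F_q⟨g⟩-submodule of dimension e in the natural module F_q^d if and only if the characteristic polynomial of g has an irreducible factor of degree e over F_q, provided e > d/2. -/
open Polynomial

section AuxHelpers
variable {F : Type} [Field F] {V : Type} [AddCommGroup V] [Module F V]

lemma pow_apply_mem' (f : V →ₗ[F] V) {U : Submodule F V} (hU : ∀ x ∈ U, f x ∈ U)
    (n : ℕ) : ∀ x ∈ U, (f ^ n) x ∈ U := by
  induction n with
  | zero => simp
  | succ n ih =>
    intro x hx
    rw [pow_succ, Module.End.mul_apply]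
    exact ih _ (hU x hx)

lemma aeval_apply_mem' (f : V →ₗ[F] V) {U : Submodule F V} (hU : ∀ x ∈ U, f x ∈ U)
    (q : F[X]) (x : V) (hx : x ∈ U) : aeval f q x ∈ U := by
  induction q using Polynomial.induction_on' with
  | add p q hp hq => rw [map_add, LinearMap.add_apply]; exact U.add_mem hp hq
  | monomial n a =>
    rw [aeval_monomial, Module.End.mul_apply, Module.algebraMap_end_apply]
    exact U.smul_mem _ (pow_apply_mem' f hU n x hx)

lemma restrict_pow_apply' (f : V →ₗ[F] V) {U : Submodule F V} (hU : ∀ x ∈ U, f x ∈ U)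
    (n : ℕ) : ∀ x : U, (((f.restrict hU) ^ n) x : V) = (f ^ n) (x : V) := by
  induction n with
  | zero => simp
  | succ n ih =>
    intro x
    rw [pow_succ, Module.End.mul_apply, ih, pow_succ, Module.End.mul_apply,
      LinearMap.restrict_coe_apply]

lemma aeval_restrict_apply' (f : V →ₗ[F] V) {U : Submodule F V} (hU : ∀ x ∈ U, f x ∈ U)
    (q : F[X]) (x : U) : ((aeval (f.restrict hU) q) x : V) = aeval f q (x : V) := by
  induction q using Polynomial.induction_on' with
  | add p q hp hq => rw [map_add, map_add, LinearMap.add_apply, LinearMap.add_apply,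
      Submodule.coe_add, hp, hq]
  | monomial n a =>
    rw [aeval_monomial, aeval_monomial, Module.End.mul_apply, Module.End.mul_apply,
      Module.algebraMap_end_apply, Module.algebraMap_end_apply, Submodule.coe_smul,
      restrict_pow_apply']

/-- The linear map `q ↦ (aeval f q) v`. -/
noncomputable def evalAtMap (f : V →ₗ[F] V) (v : V) : F[X] →ₗ[F] V where
  toFun q := aeval f q v
  map_add' p q := by simp [map_add]
  map_smul' c q := by simp

@[simp] lemma evalAtMap_apply (f : V →ₗ[F] V) (v : V) (q : F[X]) :
    evalAtMap f v q = aeval f q v := rfl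

lemma finrank_quot_span_irreducible {p : F[X]} (hp : Irreducible p) :
    Module.finrank F (F[X] ⧸ (Submodule.restrictScalars F (Ideal.span {p}))) = p.natDegree := by
  rw [(Submodule.Quotient.restrictScalarsEquiv F (Ideal.span {p})).finrank_eq]
  show Module.finrank F (AdjoinRoot p) = p.natDegree
  rw [(AdjoinRoot.powerBasis hp.ne_zero).finrank]
  rfl

end AuxHelpers

/-- A subspace is invariant under a matrix. -/
def MatInvariant {F : Type} [Field F] {d : ℕ} (g : Matrix (Fin d) (Fin d) F)
    (U : Submodule F (Fin d → F)) : Prop :=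
  U.map (Matrix.toLin' g) ≤ U

/-- A subspace is a nonzero irreducible `F_q⟨g⟩`-submodule. -/
def MatIrreducibleOn {F : Type} [Field F] {d : ℕ} (g : Matrix (Fin d) (Fin d) F)
    (U : Submodule F (Fin d → F)) : Prop :=
  U ≠ ⊥ ∧ MatInvariant g U ∧ ∀ W ≤ U, MatInvariant g W → W = ⊥ ∨ W = U

theorem cyclic_main {F : Type} [Field F] {d : ℕ} (M : Matrix (Fin d) (Fin d) F)
    {p : F[X]} (hp : Irreducible p) {v : Fin d → F} (hv : v ≠ 0)
    (hpv : aeval (Matrix.toLin' M) p v = 0) :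
    MatIrreducibleOn M (LinearMap.range (evalAtMap (Matrix.toLin' M) v)) ∧
      Module.finrank F (LinearMap.range (evalAtMap (Matrix.toLin' M) v)) = p.natDegree := by
  set f := Matrix.toLin' M with hf
  set φ := evalAtMap f v with hφ
  set W := LinearMap.range φ with hWdef
  have hvW : v ∈ W := ⟨1, by rw [hφ, evalAtMap_apply, map_one, Module.End.one_apply]⟩
  have hW0 : W ≠ ⊥ := fun h => hv (by simpa [h] using hvW)
  have hWinv : MatInvariant M W := by
    rintro x ⟨y, ⟨q, rfl⟩, rfl⟩
    exact ⟨X * q, by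
      rw [hφ, evalAtMap_apply, evalAtMap_apply, map_mul, Module.End.mul_apply, aeval_X]⟩
  have hker : LinearMap.ker φ = Submodule.restrictScalars F (Ideal.span {p}) := by
    ext q
    simp only [LinearMap.mem_ker, Submodule.restrictScalars_mem, Ideal.mem_span_singleton]
    constructor
    · intro hq
      by_contra hnd
      obtain ⟨a, b, hab⟩ := (hp.coprime_iff_not_dvd.2 hnd)
      apply hv
      have : v = aeval f (a * p + b * q) v := by rw [hab]; simp
      rw [this, map_add, LinearMap.add_apply, map_mul, map_mul, Module.End.mul_apply,
        Module.End.mul_apply, hpv]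
      have hqv : aeval f q v = 0 := hq
      rw [hqv, map_zero, map_zero, add_zero]
    · rintro ⟨c, rfl⟩
      show aeval f (p * c) v = 0
      rw [mul_comm, map_mul, Module.End.mul_apply, hpv, map_zero]
  have hrank : Module.finrank F W = p.natDegree := by
    rw [← (φ.quotKerEquivRange).finrank_eq, hker, finrank_quot_span_irreducible hp]
  refine ⟨⟨hW0, hWinv, ?_⟩, hrank⟩
  intro W' hle hinv'
  rcases eq_or_ne W' ⊥ with h | hne
  · exact Or.inl h
  right
  obtain ⟨w, hwW', hw0⟩ := Submodule.exists_mem_ne_zero_of_ne_bot hne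
  obtain ⟨q, rfl⟩ := hle hwW'
  have hfW' : ∀ x ∈ W', f x ∈ W' := fun x hx => hinv' ⟨x, hx, rfl⟩
  have hnd : ¬ p ∣ q := by
    intro hdvd
    apply hw0
    have : q ∈ LinearMap.ker φ := by
      rw [hker]; simpa [Ideal.mem_span_singleton] using hdvd
    exact this
  obtain ⟨a, b, hab⟩ := (hp.coprime_iff_not_dvd.2 hnd)
  have hvW' : v ∈ W' := by
    have : v = aeval f (a * p + b * q) v := by rw [hab]; simp
    rw [this, map_add, LinearMap.add_apply, map_mul, map_mul, Module.End.mul_apply,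
      Module.End.mul_apply, hpv, map_zero, zero_add]
    exact aeval_apply_mem' f hfW' b _ hwW'
  apply le_antisymm hle
  rintro x ⟨r, rfl⟩
  exact aeval_apply_mem' f hfW' r v hvW'

lemma aeval_mulVec_eigen {K : Type*} [Field K] {d : ℕ} {N : Matrix (Fin d) (Fin d) K}
    {lam : K} {w : Fin d → K} (hw : N.mulVec w = lam • w) (q : K[X]) :
    (aeval N q).mulVec w = q.eval lam • w := by
  have hpow : ∀ n : ℕ, (N ^ n).mulVec w = lam ^ n • w := by
    intro n
    induction n with
    | zero => simp
    | succ n ih =>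
      rw [pow_succ, ← Matrix.mulVec_mulVec, hw, Matrix.mulVec_smul, ih, smul_smul, pow_succ]
      ring_nf
  induction q using Polynomial.induction_on' with
  | add p q hp hq => rw [map_add, Matrix.add_mulVec, hp, hq, eval_add, add_smul]
  | monomial n a =>
    rw [aeval_monomial, eval_monomial, Algebra.algebraMap_eq_smul_one, Matrix.smul_mul,
      Matrix.one_mul, Matrix.smul_mulVec, hpow, smul_smul]

lemma exists_kernel_vec {F : Type} [Field F] {d : ℕ} (M : Matrix (Fin d) (Fin d) F)
    {p : F[X]} (hp : Irreducible p) (hdvd : p ∣ M.charpoly) :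
    ∃ v : Fin d → F, v ≠ 0 ∧ aeval (Matrix.toLin' M) p v = 0 := by
  haveI := Fact.mk hp
  set K := AdjoinRoot p with hK
  set σ := algebraMap F K with hσ
  set M' := M.map σ with hM'
  set lam := AdjoinRoot.root p with hlam
  have hplam : (p.map σ).eval lam = 0 := by
    rw [eval_map, ← aeval_def, AdjoinRoot.aeval_eq, AdjoinRoot.mk_self]
  have hchar : (M'.charpoly).eval lam = 0 := by
    rw [hM', Matrix.charpoly_map]
    obtain ⟨c, hc⟩ := hdvd
    rw [hc, Polynomial.map_mul, eval_mul, hplam, zero_mul]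
  have hdet : (lam • (1 : Matrix (Fin d) (Fin d) K) - M').det = 0 := by
    have h2 : ((evalRingHom lam).mapMatrix (Matrix.charmatrix M')).det = 0 := by
      rw [← RingHom.map_det]
      exact hchar
    rw [← h2]
    congr 1
    ext i j
    rcases eq_or_ne i j with rfl | hij
    · simp [Matrix.charmatrix_apply_eq, Matrix.one_apply]
    · simp [Matrix.charmatrix_apply_ne _ _ _ hij, Matrix.one_apply_ne hij]
  obtain ⟨w, hw0, hw⟩ := Matrix.exists_mulVec_eq_zero_iff.2 hdet
  have hMw : M'.mulVec w = lam • w := by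
    rw [Matrix.sub_mulVec, sub_eq_zero, Matrix.smul_mulVec, Matrix.one_mulVec] at hw
    exact hw.symm
  have hcomm : aeval M' (p.map σ) = (aeval M p).map σ := by
    rw [aeval_map_algebraMap]
    exact aeval_algHom_apply ((Algebra.ofId F K).mapMatrix) M p
  have hkerK : ((aeval M p).map σ).mulVec w = 0 := by
    rw [← hcomm, aeval_mulVec_eigen hMw, hplam, zero_smul]
  have hdetF : (aeval M p).det = 0 := by
    have h1 : ((aeval M p).map σ).det = 0 := Matrix.exists_mulVec_eq_zero_iff.1 ⟨w, hw0, hkerK⟩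
    rw [show (aeval M p).map σ = σ.mapMatrix (aeval M p) from rfl, ← RingHom.map_det] at h1
    exact (_root_.map_eq_zero σ).1 h1
  obtain ⟨v, hv0, hv⟩ := Matrix.exists_mulVec_eq_zero_iff.2 hdetF
  refine ⟨v, hv0, ?_⟩
  have h3 : aeval (Matrix.toLin' M) p = Matrix.toLin' (aeval M p) :=
    aeval_algHom_apply (Matrix.toLinAlgEquiv' : Matrix (Fin d) (Fin d) F ≃ₐ[F] _) M p
  rw [h3, Matrix.toLin'_apply, hv]

/-- For `e > d/2`, `g ∈ GL(d,q)` has an irreducible `e`-dimensional invariant subspace of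
`F_q^d` iff its characteristic polynomial has an irreducible factor of degree `e`. -/
theorem fat_iff_charpoly_factor (q d e : ℕ) (hq : IsPrimePow q) (he : d < 2 * e)
    (F : Type) [Field F] [Fintype F] [DecidableEq F] (hF : Fintype.card F = q)
    (g : GL (Fin d) F) :
    (∃ U : Submodule F (Fin d → F),
        MatIrreducibleOn (g : Matrix (Fin d) (Fin d) F) U ∧ Module.finrank F U = e) ↔
      ∃ p : Polynomial F, Irreducible p ∧
        p ∣ (g : Matrix (Fin d) (Fin d) F).charpoly ∧ p.natDegree = e := by
  set M : Matrix (Fin d) (Fin d) F := (g : Matrix (Fin d) (Fin d) F) with hM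
  set f := Matrix.toLin' M with hfdef
  constructor
  · rintro ⟨U, ⟨hne, hinv, hmin⟩, hrank⟩
    have hfU : ∀ x ∈ U, f x ∈ U := fun x hx => hinv (Submodule.mem_map_of_mem hx)
    set f' := f.restrict hfU with hf'
    haveI : Nontrivial U := Submodule.nontrivial_iff_ne_bot.2 hne
    have hint : IsIntegral F f' := LinearMap.isIntegral f'
    set p := minpoly F f' with hpdef
    have hp0 : p ≠ 0 := minpoly.ne_zero hint
    haveI : Nontrivial (Module.End F U) := by
      obtain ⟨u, hu⟩ := exists_ne (0 : U)
      exact ⟨1, 0, fun h => hu (by simpa using LinearMap.congr_fun h u)⟩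
    have hpu : ¬ IsUnit p := minpoly.not_isUnit F f'
    have haevalp : aeval f' p = 0 := minpoly.aeval F f'
    have hps : ∀ a b : F[X], p = a * b → IsUnit a ∨ IsUnit b := by
      intro a b hab
      by_contra hcon
      push_neg at hcon
      obtain ⟨hua, hub⟩ := hcon
      have ha0 : a ≠ 0 := fun h => hp0 (by rw [hab, h, zero_mul])
      have hb0 : b ≠ 0 := fun h => hp0 (by rw [hab, h, mul_zero])
      have hdega : 0 < a.natDegree := by
        rcases Nat.eq_zero_or_pos a.natDegree with h | h
        · exfalso
          apply hua
          rw [Polynomial.eq_C_of_natDegree_eq_zero h]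
          exact Polynomial.isUnit_C.2 (isUnit_iff_ne_zero.2
            (fun hc => ha0 (by rw [Polynomial.eq_C_of_natDegree_eq_zero h, hc, map_zero])))
        · exact h
      have hdegb : 0 < b.natDegree := by
        rcases Nat.eq_zero_or_pos b.natDegree with h | h
        · exfalso
          apply hub
          rw [Polynomial.eq_C_of_natDegree_eq_zero h]
          exact Polynomial.isUnit_C.2 (isUnit_iff_ne_zero.2
            (fun hc => hb0 (by rw [Polynomial.eq_C_of_natDegree_eq_zero h, hc, map_zero])))
        · exact h
      have hmuldeg : p.natDegree = a.natDegree + b.natDegree := by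
        rw [hab, Polynomial.natDegree_mul ha0 hb0]
      have haea : aeval f' a ≠ 0 := by
        intro h
        have hd := Polynomial.natDegree_le_of_dvd (minpoly.dvd F f' h) ha0
        rw [← hpdef] at hd
        omega
      have haeb : aeval f' b ≠ 0 := by
        intro h
        have hd := Polynomial.natDegree_le_of_dvd (minpoly.dvd F f' h) hb0
        rw [← hpdef] at hd
        omega
      set Wk := (LinearMap.ker (aeval f' a)).map U.subtype with hWk
      have hWkle : Wk ≤ U := Submodule.map_subtype_le U _
      have hcommf : aeval f' a * f' = f' * aeval f' a := by
        calc aeval f' a * f' = aeval f' a * aeval f' X := by rw [aeval_X]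
        _ = aeval f' (a * X) := (map_mul _ _ _).symm
        _ = aeval f' (X * a) := by rw [mul_comm]
        _ = f' * aeval f' a := by rw [map_mul, aeval_X]
      have hWkinv : MatInvariant M Wk := by
        rintro x ⟨_, ⟨z, hz, rfl⟩, rfl⟩
        refine ⟨f' z, ?_, LinearMap.restrict_coe_apply f hfU z⟩
        show aeval f' a (f' z) = 0
        rw [← Module.End.mul_apply, hcommf, Module.End.mul_apply,
          LinearMap.mem_ker.1 hz, map_zero]
      have hWkne : Wk ≠ ⊥ := by
        obtain ⟨u0, hu0⟩ : ∃ u0, aeval f' b u0 ≠ 0 := by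
          by_contra h
          push_neg at h
          exact haeb (LinearMap.ext fun u => h u)
        have hz0 : aeval f' b u0 ∈ LinearMap.ker (aeval f' a) := by
          rw [LinearMap.mem_ker, ← Module.End.mul_apply, ← map_mul, ← hab, haevalp,
            LinearMap.zero_apply]
        intro h
        apply hu0
        have : (↑(aeval f' b u0) : Fin d → F) ∈ Wk := ⟨_, hz0, rfl⟩
        rw [h, Submodule.mem_bot] at this
        exact Subtype.ext this
      have hWkneU : Wk ≠ U := by
        intro h
        apply haea
        apply LinearMap.ker_eq_top.1
        apply Submodule.map_injective_of_injective U.injective_subtype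
        rw [Submodule.map_subtype_top, ← hWk, h]
      rcases hmin Wk hWkle hWkinv with h | h
      · exact hWkne h
      · exact hWkneU h
    have hirr_p : Irreducible p := ⟨hpu, hps⟩
    obtain ⟨u, huU, hu0⟩ := Submodule.exists_mem_ne_zero_of_ne_bot hne
    have hpv : aeval f p u = 0 := by
      have h2 := aeval_restrict_apply' f hfU p ⟨u, huU⟩
      rw [haevalp] at h2
      simpa using h2.symm
    obtain ⟨⟨hW0, hWinv, _⟩, hWrank⟩ := cyclic_main M hirr_p hu0 hpv
    set W := LinearMap.range (evalAtMap f u) with hWdef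
    have hWle : W ≤ U := by
      rintro x ⟨r, rfl⟩
      exact aeval_apply_mem' f hfU r u huU
    have hWU : W = U := (hmin W hWle hWinv).resolve_left hW0
    refine ⟨p, hirr_p, ?_, ?_⟩
    · have h1 : aeval f' (minpoly F f) = 0 := by
        apply LinearMap.ext
        intro z
        apply Subtype.ext
        have h2 := aeval_restrict_apply' f hfU (minpoly F f) z
        rw [h2]
        have h3 : aeval f (minpoly F f) = 0 := minpoly.aeval F f
        simp [h3]
      have h2 : p ∣ minpoly F f := minpoly.dvd F f' h1
      have h3 : minpoly F f = minpoly F M := Matrix.minpoly_toLin' M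
      exact h2.trans (h3 ▸ Matrix.minpoly_dvd_charpoly M)
    · rw [← hWrank, hWU, hrank]
  · rintro ⟨p, hp, hdvd, hdeg⟩
    obtain ⟨v, hv0, hpv⟩ := exists_kernel_vec M hp hdvd
    obtain ⟨hirr, hrank⟩ := cyclic_main M hp hv0 hpv
    exact ⟨_, hirr, hrank.trans hdeg⟩
end

section
/- Let d/2 < e_1, e_2 < d and let (g_1, g_2) ∈ GL(d,q)^2 be a reducible fat(d,q;e_1,e_2)-pair with irreducible submodules U_1, U_2 of dimensions e_1, e_2 respectively, and let W be a nonzero proper F_q⟨g_1,g_2⟩-submodule of V. Then either W ∩ U_1 = W ∩ U_2 = {0} and 1 ≤ dim W ≤ d − max{e_1,e_2}, or U_1 + U_2 ⊆ W (indeed the F_q⟨g_1,g_2⟩-submodule generated by U_1, U_2 lies in W) and max{e_1,e_2} ≤ dim W ≤ d − 1. -/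
lemma inter_cases {F : Type} [Field F] {d : ℕ} {g : Matrix (Fin d) (Fin d) F}
    {U W : Submodule F (Fin d → F)} (hU : MatIrreducibleOn g U) (hW : MatInvariant g W) :
    W ⊓ U = ⊥ ∨ U ≤ W := by
  have hinv : MatInvariant g (W ⊓ U) :=
    le_trans (Submodule.map_inf_le _) (inf_le_inf hW hU.2.1)
  rcases hU.2.2 (W ⊓ U) inf_le_right hinv with h | h
  · exact Or.inl h
  · exact Or.inr (h ▸ inf_le_left)

lemma dim_lemma {F : Type} [Field F] {d : ℕ} {U W : Submodule F (Fin d → F)}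
    (h : W ⊓ U = ⊥) : Module.finrank F W + Module.finrank F U ≤ d := by
  have := Submodule.finrank_sup_add_finrank_inf_eq W U
  rw [h] at this
  simp at this
  calc Module.finrank F W + Module.finrank F U
      = Module.finrank F (W ⊔ U : Submodule F (Fin d → F)) := this.symm
    _ ≤ Module.finrank F (Fin d → F) := Submodule.finrank_le _
    _ = d := by simp

/-- Dichotomy for an invariant subspace `W` with respect to a reducible fat pair:
either `W` intersects both `U₁, U₂` trivially and `1 ≤ dim W ≤ d - max{e₁,e₂}`,
or `U₁ + U₂ ⊆ W` and `max{e₁,e₂} ≤ dim W ≤ d - 1`. -/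
theorem cases_for_W (q d e₁ e₂ : ℕ) (hq : IsPrimePow q)
    (he₁ : d < 2 * e₁) (he₁' : e₁ < d) (he₂ : d < 2 * e₂) (he₂' : e₂ < d)
    (F : Type) [Field F] [Fintype F] [DecidableEq F] (hF : Fintype.card F = q)
    (g₁ g₂ : GL (Fin d) F) (U₁ U₂ W : Submodule F (Fin d → F))
    (hU₁ : MatIrreducibleOn (g₁ : Matrix (Fin d) (Fin d) F) U₁)
    (hU₁e : Module.finrank F U₁ = e₁)
    (hU₂ : MatIrreducibleOn (g₂ : Matrix (Fin d) (Fin d) F) U₂)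
    (hU₂e : Module.finrank F U₂ = e₂)
    (hWbot : W ≠ ⊥) (hWtop : W ≠ ⊤)
    (hW₁ : MatInvariant (g₁ : Matrix (Fin d) (Fin d) F) W)
    (hW₂ : MatInvariant (g₂ : Matrix (Fin d) (Fin d) F) W) :
    (W ⊓ U₁ = ⊥ ∧ W ⊓ U₂ = ⊥ ∧ 1 ≤ Module.finrank F W ∧
        Module.finrank F W ≤ d - max e₁ e₂) ∨
      (U₁ ⊔ U₂ ≤ W ∧ max e₁ e₂ ≤ Module.finrank F W ∧ Module.finrank F W ≤ d - 1) := by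
  have hdW : Module.finrank F W < d := by
    have := Submodule.finrank_lt (s := W) hWtop
    simpa using this
  have hpos : 1 ≤ Module.finrank F W := by
    rw [Nat.one_le_iff_ne_zero]
    intro h
    exact hWbot (Submodule.finrank_eq_zero.mp h)
  by_cases h1 : U₁ ≤ W
  · have hWe : e₁ ≤ Module.finrank F W := hU₁e ▸ Submodule.finrank_mono h1
    have h2 : U₂ ≤ W := by
      rcases inter_cases hU₂ hW₂ with h | h
      · exfalso
        have := dim_lemma h
        rw [hU₂e] at this
        omega
      · exact h
    refine Or.inr ⟨sup_le h1 h2, ?_, ?_⟩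
    · have : e₂ ≤ Module.finrank F W := hU₂e ▸ Submodule.finrank_mono h2
      omega
    · omega
  by_cases h2 : U₂ ≤ W
  · have hWe : e₂ ≤ Module.finrank F W := hU₂e ▸ Submodule.finrank_mono h2
    have h1' : U₁ ≤ W := by
      rcases inter_cases hU₁ hW₁ with h | h
      · exfalso
        have := dim_lemma h
        rw [hU₁e] at this
        omega
      · exact h
    exact absurd h1' h1
  · have hb1 : W ⊓ U₁ = ⊥ := (inter_cases hU₁ hW₁).resolve_right h1
    have hb2 : W ⊓ U₂ = ⊥ := (inter_cases hU₂ hW₂).resolve_right h2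
    have hd1 := dim_lemma hb1
    have hd2 := dim_lemma hb2
    rw [hU₁e] at hd1; rw [hU₂e] at hd2
    exact Or.inl ⟨hb1, hb2, hpos, by omega⟩
end

section
/- Let 1 < d/2 < e_1, e_2 ≤ d, and let (g_1, g_2) ∈ GL(d,q)^2 be a fat(d,q;e_1,e_2)-pair. Then there exists an F_q⟨g_1,g_2⟩-composition factor N of the natural module V = F_q^d with n = dim N ≥ max{e_1,e_2} > d/2, such that the induced elements ḡ_1, ḡ_2 ∈ GL(n,q) form an irreducible fat(n,q;e_1,e_2)-pair, i.e., N is irreducible as F_q⟨ḡ_1,ḡ_2⟩-module and each ḡ_i has an irreducible e_i-dimensional F_q⟨ḡ_i⟩-submodule in N. -/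
lemma MatInvariant.inf {F : Type} [Field F] {d : ℕ} {g : Matrix (Fin d) (Fin d) F}
    {U W : Submodule F (Fin d → F)} (hU : MatInvariant g U) (hW : MatInvariant g W) :
    MatInvariant g (U ⊓ W) :=
  le_trans (Submodule.map_inf_le _) (inf_le_inf hU hW)

lemma MatInvariant.sup {F : Type} [Field F] {d : ℕ} {g : Matrix (Fin d) (Fin d) F}
    {U W : Submodule F (Fin d → F)} (hU : MatInvariant g U) (hW : MatInvariant g W) :
    MatInvariant g (U ⊔ W) := by
  unfold MatInvariant at *
  rw [Submodule.map_sup]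
  exact sup_le_sup hU hW

lemma MatInvariant.bot {F : Type} [Field F] {d : ℕ} (g : Matrix (Fin d) (Fin d) F) :
    MatInvariant g (⊥ : Submodule F (Fin d → F)) := by
  simp [MatInvariant]

/-- Theorem (reduction): a `fat(d,q;e₁,e₂)`-pair `(g₁,g₂)` admits a composition factor
`N = X/Y` of the natural module of dimension `n ≥ max{e₁,e₂} > d/2` on which the induced
pair is an irreducible `fat(n,q;e₁,e₂)`-pair.  The quotient `X/Y` is encoded via the
interval of submodules between `Y` and `X`: irreducibility of `X/Y` and the existence of
irreducible `eᵢ`-dimensional `⟨ḡᵢ⟩`-submodules of `X/Y` are stated lattice-theoretically. -/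
theorem fat_pair_reduction (q d e₁ e₂ : ℕ) (hq : IsPrimePow q) (hd : 2 < d)
    (he₁ : d < 2 * e₁) (he₁' : e₁ ≤ d) (he₂ : d < 2 * e₂) (he₂' : e₂ ≤ d)
    (F : Type) [Field F] [Fintype F] [DecidableEq F] (hF : Fintype.card F = q)
    (g₁ g₂ : GL (Fin d) F) (U₁ U₂ : Submodule F (Fin d → F))
    (hU₁ : MatIrreducibleOn (g₁ : Matrix (Fin d) (Fin d) F) U₁)
    (hU₁e : Module.finrank F U₁ = e₁)
    (hU₂ : MatIrreducibleOn (g₂ : Matrix (Fin d) (Fin d) F) U₂)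
    (hU₂e : Module.finrank F U₂ = e₂) :
    ∃ X Y : Submodule F (Fin d → F),
      Y ≤ X ∧ Y ≠ X ∧
      MatInvariant (g₁ : Matrix (Fin d) (Fin d) F) X ∧
      MatInvariant (g₂ : Matrix (Fin d) (Fin d) F) X ∧
      MatInvariant (g₁ : Matrix (Fin d) (Fin d) F) Y ∧
      MatInvariant (g₂ : Matrix (Fin d) (Fin d) F) Y ∧
      -- `n = dim X/Y ≥ max{e₁,e₂} > d/2`
      max e₁ e₂ ≤ Module.finrank F X - Module.finrank F Y ∧
      d < 2 * (Module.finrank F X - Module.finrank F Y) ∧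
      -- `X/Y` is irreducible as an `F_q⟨ḡ₁,ḡ₂⟩`-module
      (∀ W : Submodule F (Fin d → F), Y ≤ W → W ≤ X →
        MatInvariant (g₁ : Matrix (Fin d) (Fin d) F) W →
        MatInvariant (g₂ : Matrix (Fin d) (Fin d) F) W → W = Y ∨ W = X) ∧
      -- `ḡ₁` has an irreducible `e₁`-dimensional submodule `Z₁/Y` of `X/Y`
      (∃ Z₁ : Submodule F (Fin d → F), Y ≤ Z₁ ∧ Z₁ ≤ X ∧
        MatInvariant (g₁ : Matrix (Fin d) (Fin d) F) Z₁ ∧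
        Module.finrank F Z₁ = Module.finrank F Y + e₁ ∧
        ∀ W : Submodule F (Fin d → F), Y ≤ W → W ≤ Z₁ →
          MatInvariant (g₁ : Matrix (Fin d) (Fin d) F) W → W = Y ∨ W = Z₁) ∧
      -- `ḡ₂` has an irreducible `e₂`-dimensional submodule `Z₂/Y` of `X/Y`
      (∃ Z₂ : Submodule F (Fin d → F), Y ≤ Z₂ ∧ Z₂ ≤ X ∧
        MatInvariant (g₂ : Matrix (Fin d) (Fin d) F) Z₂ ∧
        Module.finrank F Z₂ = Module.finrank F Y + e₂ ∧
        ∀ W : Submodule F (Fin d → F), Y ≤ W → W ≤ Z₂ →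
          MatInvariant (g₂ : Matrix (Fin d) (Fin d) F) W → W = Y ∨ W = Z₂) := by
  classical
  obtain ⟨hU₁ne, hU₁inv, hU₁irr⟩ := hU₁
  obtain ⟨hU₂ne, hU₂inv, hU₂irr⟩ := hU₂
  set G₁ : Matrix (Fin d) (Fin d) F := (g₁ : Matrix (Fin d) (Fin d) F)
  set G₂ : Matrix (Fin d) (Fin d) F := (g₂ : Matrix (Fin d) (Fin d) F)
  have hee : d < e₁ + e₂ := by omega
  -- dimension bound helper
  have hrkle : ∀ W : Submodule F (Fin d → F), Module.finrank F W ≤ d := by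
    intro W
    have := Submodule.finrank_le W
    rwa [Module.finrank_fin_fun] at this
  have hsum : ∀ (W U : Submodule F (Fin d → F)), W ⊓ U = ⊥ →
      Module.finrank F ↑(W ⊔ U) = Module.finrank F W + Module.finrank F U := by
    intro W U h
    have := Submodule.finrank_sup_add_finrank_inf_eq W U
    rw [h, finrank_bot] at this
    omega
  -- the set of invariant subspaces meeting U₁ trivially
  set S : Set (Submodule F (Fin d → F)) :=
    {W | MatInvariant G₁ W ∧ MatInvariant G₂ W ∧ W ⊓ U₁ = ⊥} with hS
  have hSbot : (⊥ : Submodule F (Fin d → F)) ∈ S :=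
    ⟨MatInvariant.bot _, MatInvariant.bot _, bot_inf_eq U₁⟩
  obtain ⟨Y, hYmem, hYmax⟩ := (set_has_maximal_iff_noetherian.mpr inferInstance) S ⟨⊥, hSbot⟩
  obtain ⟨hY1, hY2, hYU₁⟩ := hYmem
  -- any W ∈ S has finrank W + e₁ ≤ d
  have hSrk : ∀ W : Submodule F (Fin d → F), W ⊓ U₁ = ⊥ → Module.finrank F W + e₁ ≤ d := by
    intro W h
    have := hsum W U₁ h
    have h2 := hrkle (W ⊔ U₁)
    rw [this, hU₁e] at h2
    exact h2
  have hYrk : Module.finrank F Y + e₁ ≤ d := hSrk Y hYU₁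
  -- Y meets U₂ trivially too
  have hYU₂ : Y ⊓ U₂ = ⊥ := by
    rcases hU₂irr (Y ⊓ U₂) inf_le_right (hY2.inf hU₂inv) with h | h
    · exact h
    · exfalso
      have hle : U₂ ≤ Y := by rw [← h]; exact inf_le_left
      have := Submodule.finrank_mono hle
      rw [hU₂e] at this
      omega
  have hYrk₂ : Module.finrank F Y + e₂ ≤ d := by
    have := hsum Y U₂ hYU₂
    have h2 := hrkle (Y ⊔ U₂)
    rw [this, hU₂e] at h2
    exact h2
  -- Y ≠ ⊤
  have hYtop : Y ≠ ⊤ := by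
    intro h
    rw [h, top_inf_eq] at hYU₁
    exact hU₁ne hYU₁
  -- minimal invariant X with Y < X
  set T : Set (Submodule F (Fin d → F)) :=
    {X | MatInvariant G₁ X ∧ MatInvariant G₂ X ∧ Y < X} with hT
  have hTtop : (⊤ : Submodule F (Fin d → F)) ∈ T := by
    refine ⟨le_top, le_top, lt_of_le_of_ne le_top hYtop⟩
  obtain ⟨X, hXmem, hXmin⟩ := (set_has_minimal_iff_artinian.mpr inferInstance) T ⟨⊤, hTtop⟩
  obtain ⟨hX1, hX2, hYX⟩ := hXmem
  -- U₁ ≤ X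
  have hXU₁ : U₁ ≤ X := by
    rcases hU₁irr (X ⊓ U₁) inf_le_right (hX1.inf hU₁inv) with h | h
    · exfalso
      exact hYmax X ⟨hX1, hX2, h⟩ hYX
    · rw [← h]; exact inf_le_left
  -- finrank X ≥ finrank Y + e₁
  have hXrk₁ : Module.finrank F Y + e₁ ≤ Module.finrank F X := by
    have hle : Y ⊔ U₁ ≤ X := sup_le hYX.le hXU₁
    have := Submodule.finrank_mono hle
    rw [hsum Y U₁ hYU₁, hU₁e] at this
    exact this
  -- U₂ ≤ X
  have hXU₂ : U₂ ≤ X := by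
    rcases hU₂irr (X ⊓ U₂) inf_le_right (hX2.inf hU₂inv) with h | h
    · exfalso
      have h1 := hsum X U₂ h
      have h2 := hrkle (X ⊔ U₂)
      rw [h1, hU₂e] at h2
      omega
    · rw [← h]; exact inf_le_left
  have hXrk₂ : Module.finrank F Y + e₂ ≤ Module.finrank F X := by
    have hle : Y ⊔ U₂ ≤ X := sup_le hYX.le hXU₂
    have := Submodule.finrank_mono hle
    rw [hsum Y U₂ hYU₂, hU₂e] at this
    exact this
  -- irreducible Z construction, uniform in i
  have key : ∀ (G : Matrix (Fin d) (Fin d) F) (U : Submodule F (Fin d → F)) (e : ℕ),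
      MatInvariant G Y → MatInvariant G U →
      (∀ W ≤ U, MatInvariant G W → W = ⊥ ∨ W = U) →
      Module.finrank F U = e → Y ⊓ U = ⊥ → U ≤ X →
      ∃ Z : Submodule F (Fin d → F), Y ≤ Z ∧ Z ≤ X ∧
        MatInvariant G Z ∧
        Module.finrank F Z = Module.finrank F Y + e ∧
        ∀ W : Submodule F (Fin d → F), Y ≤ W → W ≤ Z →
          MatInvariant G W → W = Y ∨ W = Z := by
    intro G U e hGY hGU hGirr hUe hYU hUX
    refine ⟨Y ⊔ U, le_sup_left, sup_le hYX.le hUX, hGY.sup hGU, by rw [hsum Y U hYU, hUe], ?_⟩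
    intro W hYW hWZ hGW
    rcases hGirr (W ⊓ U) inf_le_right (hGW.inf hGU) with h | h
    · -- W ⊓ U = ⊥ : then W = Y
      left
      have hsup : W ⊔ U = Y ⊔ U :=
        le_antisymm (sup_le hWZ le_sup_right) (sup_le_sup_right hYW U)
      have h1 := hsum W U h
      have h2 := hsum Y U hYU
      rw [hsup, h2] at h1
      exact (Submodule.eq_of_le_of_finrank_eq hYW (by omega)).symm
    · -- U ≤ W : then W = Y ⊔ U
      right
      have hUW : U ≤ W := by rw [← h]; exact inf_le_left
      exact le_antisymm hWZ (sup_le hYW hUW)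
  refine ⟨X, Y, hYX.le, hYX.ne, hX1, hX2, hY1, hY2, ?_, ?_, ?_, ?_, ?_⟩
  · simp only [max_le_iff]
    omega
  · omega
  · intro W hYW hWX hW1 hW2
    rcases eq_or_ne W Y with h | h
    · exact Or.inl h
    · rcases hWX.lt_or_eq with h2 | h2
      · exact absurd h2 (hXmin W ⟨hW1, hW2, lt_of_le_of_ne hYW (Ne.symm h)⟩)
      · exact Or.inr h2
  · exact key G₁ U₁ e₁ hY1 hU₁inv hU₁irr hU₁e hYU₁ hXU₁
  · exact key G₂ U₂ e₂ hY2 hU₂inv hU₂irr hU₂e hYU₂ hXU₂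
end
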